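/- arXiv:2405.10360 — 5 statements merged into one kernel-verified Lean document; each statement's English description precedes it below -/
import Mathlib

section
/- Let d ≥ 1, let μ be the Haar probability measure on the compact group U(d) of d×d complex unitary matrices, and let A ∈ M_d(ℂ). Then the (entrywise Bochner) integral ∫_{U(d)} V A V* dμ(V) equals (tr(A)/d) · 1, where 1 is the d×d identity matrix. -/
open Matrix MeasureTheory

namespace Stmt6Aux

variable {d : ℕ}

theorem entry_bd (V : Matrix.unitaryGroup (Fin d) ℂ) (i k : Fin d) :
    ‖(V : Matrix (Fin d) (Fin d) ℂ) i k‖ ≤ 1 := by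
  have h : ((V : Matrix (Fin d) (Fin d) ℂ) * star (V : Matrix (Fin d) (Fin d) ℂ)) i i = 1 := by
    rw [Matrix.mem_unitaryGroup_iff.mp V.2]; simp
  rw [Matrix.mul_apply] at h
  have h2 : ∀ l, (V : Matrix (Fin d) (Fin d) ℂ) i l * star ((V : Matrix (Fin d) (Fin d) ℂ)) l i
      = ((‖(V : Matrix (Fin d) (Fin d) ℂ) i l‖ ^ 2 : ℝ) : ℂ) := by
    intro l
    rw [Matrix.star_apply, Complex.star_def, Complex.mul_conj, Complex.sq_norm]
  rw [Finset.sum_congr rfl (fun l _ => h2 l)] at h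
  have h' : ∑ l : Fin d, ‖(V : Matrix (Fin d) (Fin d) ℂ) i l‖ ^ 2 = 1 := by
    have := congrArg Complex.re h
    simpa [← Complex.ofReal_pow] using this
  have h3 : ‖(V : Matrix (Fin d) (Fin d) ℂ) i k‖ ^ 2 ≤ 1 := by
    rw [← h']
    exact Finset.single_le_sum (f := fun l => ‖(V : Matrix (Fin d) (Fin d) ℂ) i l‖ ^ 2)
      (fun l _ => by positivity) (Finset.mem_univ k)
  nlinarith [norm_nonneg ((V : Matrix (Fin d) (Fin d) ℂ) i k)]

theorem cont_entry (A : Matrix (Fin d) (Fin d) ℂ) (i j : Fin d) :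
    Continuous (fun V : Matrix.unitaryGroup (Fin d) ℂ =>
      ((V : Matrix (Fin d) (Fin d) ℂ) * A * star (V : Matrix (Fin d) (Fin d) ℂ)) i j) := by
  have hc : Continuous (fun V : Matrix.unitaryGroup (Fin d) ℂ =>
      (V : Matrix (Fin d) (Fin d) ℂ)) := continuous_subtype_val
  simp only [Matrix.star_eq_conjTranspose]
  exact ((hc.matrix_mul continuous_const).matrix_mul hc.matrix_conjTranspose).matrix_elem i j

theorem integrable_entry [MeasurableSpace (Matrix.unitaryGroup (Fin d) ℂ)]
    [BorelSpace (Matrix.unitaryGroup (Fin d) ℂ)]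
    (μ : Measure (Matrix.unitaryGroup (Fin d) ℂ)) [IsProbabilityMeasure μ]
    (A : Matrix (Fin d) (Fin d) ℂ) (i j : Fin d) :
    Integrable (fun V : Matrix.unitaryGroup (Fin d) ℂ =>
      ((V : Matrix (Fin d) (Fin d) ℂ) * A * star (V : Matrix (Fin d) (Fin d) ℂ)) i j) μ := by
  refine Integrable.mono' (integrable_const (∑ l : Fin d, ∑ k : Fin d, ‖A k l‖))
    (cont_entry A i j).aestronglyMeasurable ?_
  filter_upwards with V
  simp only [Matrix.mul_apply]
  refine (norm_sum_le _ _).trans ?_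
  refine Finset.sum_le_sum fun l _ => ?_
  rw [norm_mul]
  have hstar : ‖star (V : Matrix (Fin d) (Fin d) ℂ) l j‖ ≤ 1 := by
    rw [Matrix.star_apply, norm_star]
    exact entry_bd V j l
  calc ‖∑ k : Fin d, (V : Matrix (Fin d) (Fin d) ℂ) i k * A k l‖ *
        ‖star (V : Matrix (Fin d) (Fin d) ℂ) l j‖
      ≤ (∑ k : Fin d, ‖A k l‖) * 1 := by
        refine mul_le_mul ?_ hstar (norm_nonneg _) (Finset.sum_nonneg fun k _ => norm_nonneg _)
        refine (norm_sum_le _ _).trans (Finset.sum_le_sum fun k _ => ?_)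
        rw [norm_mul]
        calc ‖(V : Matrix (Fin d) (Fin d) ℂ) i k‖ * ‖A k l‖
            ≤ 1 * ‖A k l‖ := by
              refine mul_le_mul_of_nonneg_right ?_ (norm_nonneg _)
              exact entry_bd V i k
          _ = ‖A k l‖ := one_mul _
    _ = ∑ k : Fin d, ‖A k l‖ := mul_one _

theorem main [MeasurableSpace (Matrix.unitaryGroup (Fin d) ℂ)]
    [BorelSpace (Matrix.unitaryGroup (Fin d) ℂ)] (hd : 1 ≤ d)
    (μ : Measure (Matrix.unitaryGroup (Fin d) ℂ))
    [μ.IsHaarMeasure] [IsProbabilityMeasure μ]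
    (A : Matrix (Fin d) (Fin d) ℂ) :
    (Matrix.of fun i j => ∫ V : Matrix.unitaryGroup (Fin d) ℂ,
        ((V : Matrix (Fin d) (Fin d) ℂ) * A * star (V : Matrix (Fin d) (Fin d) ℂ)) i j ∂μ)
      = (A.trace / d) • (1 : Matrix (Fin d) (Fin d) ℂ) := by
  haveI : ContinuousMul (Matrix.unitaryGroup (Fin d) ℂ) := by
    constructor
    apply continuous_induced_rng.mpr
    exact (continuous_subtype_val.comp continuous_fst).mul
      (continuous_subtype_val.comp continuous_snd)
  set f : Matrix.unitaryGroup (Fin d) ℂ → Matrix (Fin d) (Fin d) ℂ :=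
    fun V => (V : Matrix (Fin d) (Fin d) ℂ) * A * star (V : Matrix (Fin d) (Fin d) ℂ) with hf
  set M : Matrix (Fin d) (Fin d) ℂ := Matrix.of fun i j => ∫ V, f V i j ∂μ with hM
  have hint : ∀ i j, Integrable (fun V => f V i j) μ := fun i j => integrable_entry μ A i j
  -- invariance of the twirl
  have hinv : ∀ W : Matrix.unitaryGroup (Fin d) ℂ,
      (W : Matrix (Fin d) (Fin d) ℂ) * M * star (W : Matrix (Fin d) (Fin d) ℂ) = M := by
    intro W
    have h2 : ∀ V : Matrix.unitaryGroup (Fin d) ℂ,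
        f (W * V) = (W : Matrix (Fin d) (Fin d) ℂ) * f V * star (W : Matrix (Fin d) (Fin d) ℂ) := by
      intro V
      show ((W * V : Matrix.unitaryGroup (Fin d) ℂ) : Matrix (Fin d) (Fin d) ℂ) * A *
          star ((W * V : Matrix.unitaryGroup (Fin d) ℂ) : Matrix (Fin d) (Fin d) ℂ) = _
      have hc : ((W * V : Matrix.unitaryGroup (Fin d) ℂ) : Matrix (Fin d) (Fin d) ℂ)
          = (W : Matrix (Fin d) (Fin d) ℂ) * (V : Matrix (Fin d) (Fin d) ℂ) := rfl
      rw [hc, StarMul.star_mul, hf]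
      noncomm_ring
    ext i j
    calc ((W : Matrix (Fin d) (Fin d) ℂ) * M * star (W : Matrix (Fin d) (Fin d) ℂ)) i j
        = ∑ l : Fin d, ∑ k : Fin d, (W : Matrix (Fin d) (Fin d) ℂ) i k * M k l *
            star (W : Matrix (Fin d) (Fin d) ℂ) l j := by
          simp only [Matrix.mul_apply, Finset.sum_mul]
      _ = ∑ l : Fin d, ∑ k : Fin d, ∫ V, (W : Matrix (Fin d) (Fin d) ℂ) i k * f V k l *
            star (W : Matrix (Fin d) (Fin d) ℂ) l j ∂μ := by
          refine Finset.sum_congr rfl fun l _ => Finset.sum_congr rfl fun k _ => ?_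
          rw [hM]
          simp only [Matrix.of_apply]
          rw [← integral_const_mul, ← integral_mul_const]
      _ = ∫ V, ∑ l : Fin d, ∑ k : Fin d, (W : Matrix (Fin d) (Fin d) ℂ) i k * f V k l *
            star (W : Matrix (Fin d) (Fin d) ℂ) l j ∂μ := by
          rw [integral_finset_sum]
          · exact Finset.sum_congr rfl fun l _ => (integral_finset_sum _
              fun k _ => ((hint k l).const_mul _).mul_const _).symm
          · exact fun l _ => integrable_finset_sum _ fun k _ =>
              ((hint k l).const_mul _).mul_const _
      _ = ∫ V, ((W : Matrix (Fin d) (Fin d) ℂ) * f V * star (W : Matrix (Fin d) (Fin d) ℂ)) i j ∂μ := by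
          refine integral_congr_ae (Filter.Eventually.of_forall fun V => ?_)
          simp only [Matrix.mul_apply, Finset.sum_mul]
      _ = ∫ V, f (W * V) i j ∂μ := by
          refine integral_congr_ae (Filter.Eventually.of_forall fun V => ?_)
          show ((W : Matrix (Fin d) (Fin d) ℂ) * f V * star (W : Matrix (Fin d) (Fin d) ℂ)) i j
            = f (W * V) i j
          rw [h2 V]
      _ = ∫ V, f V i j ∂μ := integral_mul_left_eq_self (fun V => f V i j) W
      _ = M i j := rfl
  -- off-diagonal entries vanish
  have hoff : ∀ i j : Fin d, i ≠ j → M i j = 0 := by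
    intro i j hij
    set g : Fin d → ℂ := fun t => if t = i then (-1 : ℂ) else 1 with hg
    have hstar : star g = g := by
      funext t; by_cases h : t = i <;> simp [hg, h]
    have hsd : star (Matrix.diagonal g) = Matrix.diagonal g := by
      rw [Matrix.star_eq_conjTranspose, Matrix.diagonal_conjTranspose, hstar]
    have hmem : Matrix.diagonal g ∈ Matrix.unitaryGroup (Fin d) ℂ := by
      rw [Matrix.mem_unitaryGroup_iff, hsd, Matrix.diagonal_mul_diagonal]
      have : (fun t => g t * g t) = fun _ : Fin d => (1 : ℂ) := by
        funext t; by_cases h : t = i <;> simp [hg, h]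
      rw [this, Matrix.diagonal_one]
    have h : Matrix.diagonal g * M * star (Matrix.diagonal g) = M := hinv ⟨_, hmem⟩
    rw [hsd] at h
    have h' := congrFun (congrFun h i) j
    rw [Matrix.mul_diagonal, Matrix.diagonal_mul] at h'
    rw [show g i = -1 from if_pos rfl, show g j = 1 from if_neg (Ne.symm hij)] at h'
    linear_combination (-(1 : ℂ)/2) * h'
  -- diagonal entries are all equal
  have hswap : ∀ a b : Fin d, M a a = M b b := by
    intro a b
    set σ := Equiv.swap a b with hσ
    set S : Matrix (Fin d) (Fin d) ℂ := Matrix.of fun i j => if σ i = j then (1 : ℂ) else 0 with hS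
    have hS' : ∀ i j, S i j = if σ i = j then (1 : ℂ) else 0 := fun i j => rfl
    have hstarS : ∀ l j, star S l j = if σ j = l then (1 : ℂ) else 0 := by
      intro l j
      rw [Matrix.star_apply, hS' j l]
      by_cases h : σ j = l <;> simp [h]
    have hSM : ∀ (X : Matrix (Fin d) (Fin d) ℂ) i l, (S * X) i l = X (σ i) l := by
      intro X i l
      rw [Matrix.mul_apply]
      simp only [hS', ite_mul, one_mul, zero_mul]
      rw [Finset.sum_ite_eq Finset.univ (σ i) (fun k => X k l)]
      simp
    have hMS : ∀ (X : Matrix (Fin d) (Fin d) ℂ) i j, (X * star S) i j = X i (σ j) := by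
      intro X i j
      rw [Matrix.mul_apply]
      simp only [hstarS, mul_ite, mul_one, mul_zero]
      rw [Finset.sum_ite_eq Finset.univ (σ j) (fun l => X i l)]
      simp
    have hmem : S ∈ Matrix.unitaryGroup (Fin d) ℂ := by
      rw [Matrix.mem_unitaryGroup_iff]
      ext i j
      rw [Matrix.mul_apply]
      simp only [hS', hstarS, ite_mul, one_mul, zero_mul]
      rw [Finset.sum_ite_eq Finset.univ (σ i) (fun k => if σ j = k then (1:ℂ) else 0)]
      simp only [Finset.mem_univ, if_true]
      rw [Matrix.one_apply]
      by_cases h : i = j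
      · subst h; simp
      · rw [if_neg (fun hc => h (σ.injective hc.symm)), if_neg h]
    have h : S * M * star S = M := hinv ⟨_, hmem⟩
    have h' := congrFun (congrFun h a) a
    rw [hMS, hSM] at h'
    rw [hσ] at h'
    simpa [Equiv.swap_apply_left] using h'.symm
  -- trace
  have htr : ∑ k : Fin d, M k k = A.trace := by
    have htrV : ∀ V : Matrix.unitaryGroup (Fin d) ℂ, ∑ k : Fin d, f V k k = A.trace := by
      intro V
      have : Matrix.trace (f V) = A.trace := by
        rw [hf]
        rw [Matrix.trace_mul_cycle]
        rw [Matrix.UnitaryGroup.star_mul_self V, Matrix.one_mul]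
      simpa [Matrix.trace, Matrix.diag] using this
    calc ∑ k : Fin d, M k k = ∑ k : Fin d, ∫ V, f V k k ∂μ := rfl
      _ = ∫ V, ∑ k : Fin d, f V k k ∂μ := (integral_finset_sum _ fun k _ => hint k k).symm
      _ = ∫ _, A.trace ∂μ := integral_congr_ae (Filter.Eventually.of_forall fun V => htrV V)
      _ = A.trace := by simp
  -- conclude
  have hd0 : (d : ℂ) ≠ 0 := Nat.cast_ne_zero.mpr (by omega)
  ext i j
  show M i j = ((A.trace / d) • (1 : Matrix (Fin d) (Fin d) ℂ)) i j
  by_cases hij : i = j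
  · subst hij
    have hsum : (d : ℂ) * M i i = A.trace := by
      rw [← htr, Finset.sum_congr rfl fun k _ => hswap k i]
      simp [Finset.card_univ, mul_comm]
    have : M i i = A.trace / d := by
      rw [eq_div_iff hd0]
      linear_combination hsum
    rw [this]
    simp [Matrix.smul_apply, Matrix.one_apply]
  · rw [hoff i j hij]
    simp [Matrix.smul_apply, Matrix.one_apply, hij]

end Stmt6Aux

/-- The one-fold twirl over the Haar probability measure on `U(d)`:
`∫ V A V* dμ(V) = (tr A / d) • 1`, entrywise. -/
theorem stmt6 {d : ℕ} (hd : 1 ≤ d)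
    [MeasurableSpace (Matrix.unitaryGroup (Fin d) ℂ)]
    [BorelSpace (Matrix.unitaryGroup (Fin d) ℂ)]
    (μ : Measure (Matrix.unitaryGroup (Fin d) ℂ))
    [μ.IsHaarMeasure] [IsProbabilityMeasure μ]
    (A : Matrix (Fin d) (Fin d) ℂ) (i j : Fin d) :
    ∫ V : Matrix.unitaryGroup (Fin d) ℂ,
        ((V : Matrix (Fin d) (Fin d) ℂ) * A * star (V : Matrix (Fin d) (Fin d) ℂ)) i j ∂μ
      = ((A.trace / d) • (1 : Matrix (Fin d) (Fin d) ℂ)) i j := by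
  exact congrFun (congrFun (Stmt6Aux.main hd μ A) i) j
end

section
/- Let n ≥ 1, d = 2ⁿ, and let Z := σ_z ⊗ 1^{⊗(n−1)} and F := σ_x ⊗ 1^{⊗(n−1)} in M_d(ℂ) (iterated Kronecker products, where 1 is the 2×2 identity). Let U ∈ M_d(ℂ) be unitary, and suppose W₁, …, Wₙ ∈ M₂(ℂ) are unitary with W₁ ⊗ ⋯ ⊗ Wₙ = U* F U. Then W := W₁ ⊗ ⋯ ⊗ Wₙ is unitary and satisfies W* (U* Z U) W = −(U* Z U); consequently, for every ψ ∈ ℂ^d, ⟨Wψ, (U* Z U) Wψ⟩ = −⟨ψ, (U* Z U) ψ⟩, i.e. W is a strong universal adversarial attack implementable as a tensor product of single-qubit unitaries. -/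
open Matrix

/-- The `n`-fold tensor (Kronecker) product of single-qubit matrices, as a matrix
indexed by `Fin n → Fin 2`. -/
noncomputable def tensorProd {n : ℕ} (M : Fin n → Matrix (Fin 2) (Fin 2) ℂ) :
    Matrix (Fin n → Fin 2) (Fin n → Fin 2) ℂ :=
  fun s t => ∏ j, M j (s j) (t j)

/-- The Pauli-Z matrix. -/
noncomputable def σz : Matrix (Fin 2) (Fin 2) ℂ := !![1, 0; 0, -1]

/-- The Pauli-X matrix. -/
noncomputable def σx : Matrix (Fin 2) (Fin 2) ℂ := !![0, 1; 1, 0]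

lemma tensorProd_mul {n : ℕ} (M N : Fin n → Matrix (Fin 2) (Fin 2) ℂ) :
    tensorProd M * tensorProd N = tensorProd (fun i => M i * N i) := by
  funext s u
  simp only [tensorProd, Matrix.mul_apply]
  rw [Finset.prod_univ_sum, Fintype.piFinset_univ]
  simp [Finset.prod_mul_distrib]

lemma tensorProd_star {n : ℕ} (M : Fin n → Matrix (Fin 2) (Fin 2) ℂ) :
    star (tensorProd M) = tensorProd (fun i => star (M i)) := by
  funext s t
  simp [tensorProd, Matrix.star_apply, Matrix.conjTranspose_apply]

lemma tensorProd_one {n : ℕ} :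
    tensorProd (fun _ : Fin n => (1 : Matrix (Fin 2) (Fin 2) ℂ)) = 1 := by
  funext s t
  simp only [tensorProd, Matrix.one_apply]
  by_cases h : s = t
  · subst h; simp
  · rw [if_neg h]
    obtain ⟨j, hj⟩ := Function.ne_iff.mp h
    exact Finset.prod_eq_zero (Finset.mem_univ j) (by simp [hj])

lemma tensorProd_neg {n : ℕ} (i0 : Fin n) (M N : Fin n → Matrix (Fin 2) (Fin 2) ℂ)
    (h0 : M i0 = -(N i0)) (h : ∀ j, j ≠ i0 → M j = N j) :
    tensorProd M = -tensorProd N := by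
  funext s t
  simp only [tensorProd, Matrix.neg_apply]
  rw [← Finset.mul_prod_erase Finset.univ _ (Finset.mem_univ i0),
      ← Finset.mul_prod_erase Finset.univ (fun j => N j (s j) (t j)) (Finset.mem_univ i0)]
  rw [h0]
  have : ∀ j ∈ Finset.univ.erase i0, M j (s j) (t j) = N j (s j) (t j) := fun j hj =>
    by rw [h j (Finset.mem_erase.mp hj).1]
  rw [Finset.prod_congr rfl this]
  simp


/-- If single-qubit unitaries `W₁, …, Wₙ` satisfy
`W₁ ⊗ ⋯ ⊗ Wₙ = U* F U` where `F = σ_x ⊗ 1^{⊗(n-1)}`, then `W = W₁ ⊗ ⋯ ⊗ Wₙ` is a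
unitary strong universal adversarial attack: `W* (U* Z U) W = -(U* Z U)` for
`Z = σ_z ⊗ 1^{⊗(n-1)}`, and hence it flips the prediction `⟨ψ, (U*ZU) ψ⟩` of the
classifier on every input state `ψ`. -/
theorem stmt12 {n : ℕ} (hn : 1 ≤ n)
    (U : Matrix (Fin n → Fin 2) (Fin n → Fin 2) ℂ)
    (hU : U ∈ Matrix.unitaryGroup (Fin n → Fin 2) ℂ)
    (W : Fin n → Matrix (Fin 2) (Fin 2) ℂ)
    (hW : ∀ i, W i ∈ Matrix.unitaryGroup (Fin 2) ℂ)
    (Z F : Matrix (Fin n → Fin 2) (Fin n → Fin 2) ℂ)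
    (hZ : Z = tensorProd (fun j => if j = (⟨0, hn⟩ : Fin n) then σz else 1))
    (hF : F = tensorProd (fun j => if j = (⟨0, hn⟩ : Fin n) then σx else 1))
    (hWF : tensorProd W = star U * F * U) :
    tensorProd W ∈ Matrix.unitaryGroup (Fin n → Fin 2) ℂ ∧
    star (tensorProd W) * (star U * Z * U) * tensorProd W = -(star U * Z * U) ∧
    ∀ ψ : (Fin n → Fin 2) → ℂ,
      star ((tensorProd W).mulVec ψ) ⬝ᵥ
          (star U * Z * U).mulVec ((tensorProd W).mulVec ψ)
        = -(star ψ ⬝ᵥ (star U * Z * U).mulVec ψ) := by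
  set i0 : Fin n := ⟨0, hn⟩
  have hxx : σx * σx = (1 : Matrix (Fin 2) (Fin 2) ℂ) := by
    ext i j; fin_cases i <;> fin_cases j <;>
      simp [σx, Matrix.mul_apply, Fin.sum_univ_two, Matrix.one_apply]
  have hxz : σx * σz = -(σz * σx) := by
    ext i j; fin_cases i <;> fin_cases j <;>
      simp [σx, σz, Matrix.mul_apply, Fin.sum_univ_two]
  have hxstar : star σx = σx := by
    ext i j; fin_cases i <;> fin_cases j <;>
      simp [σx, Matrix.conjTranspose_apply]
  -- F is self-adjoint
  have hFstar : star F = F := by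
    rw [hF, tensorProd_star]
    refine congrArg tensorProd (funext fun j => ?_)
    by_cases h : j = i0 <;> simp [h, hxstar]
  -- F squared is 1
  have hFF : F * F = 1 := by
    rw [hF, tensorProd_mul, ← tensorProd_one]
    refine congrArg tensorProd (funext fun j => ?_)
    by_cases h : j = i0 <;> simp [h, hxx]
  -- anticommutation
  have hFZ : F * Z = -(Z * F) := by
    rw [hF, hZ, tensorProd_mul, tensorProd_mul]
    apply tensorProd_neg i0
    · simp [hxz]
    · intro j hj; simp [hj]
  have hUU' : star U * U = 1 := Matrix.mem_unitaryGroup_iff'.mp hU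
  have hUU : U * star U = 1 := Matrix.mem_unitaryGroup_iff.mp hU
  -- unitarity of tensorProd W
  have hWmem : tensorProd W ∈ Matrix.unitaryGroup (Fin n → Fin 2) ℂ := by
    rw [Matrix.mem_unitaryGroup_iff']
    rw [tensorProd_star, tensorProd_mul, ← tensorProd_one]
    exact congrArg tensorProd (funext fun i => Matrix.mem_unitaryGroup_iff'.mp (hW i))
  -- conjugation helper
  have conj_mul : ∀ (A B : Matrix (Fin n → Fin 2) (Fin n → Fin 2) ℂ),
      (star U * A * U) * (star U * B * U) = star U * (A * B) * U := by
    intro A B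
    calc (star U * A * U) * (star U * B * U)
        = star U * A * ((U * star U) * B * U) := by
          simp only [Matrix.mul_assoc]
      _ = star U * (A * B) * U := by rw [hUU]; simp only [Matrix.one_mul, Matrix.mul_assoc]
  have hWstar : star (tensorProd W) = star U * F * U := by
    rw [hWF]
    simp only [StarMul.star_mul, star_star, hFstar, Matrix.mul_assoc]
  have key : star (tensorProd W) * (star U * Z * U) * tensorProd W = -(star U * Z * U) := by
    rw [hWstar, hWF, conj_mul, conj_mul, hFZ]
    rw [Matrix.neg_mul, Matrix.mul_assoc Z F F, hFF, Matrix.mul_one]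
    simp [Matrix.mul_neg, Matrix.neg_mul]
  refine ⟨hWmem, key, fun ψ => ?_⟩
  have key' : (tensorProd W)ᴴ * (star U * Z * U) * tensorProd W = -(star U * Z * U) := key
  rw [Matrix.mulVec_mulVec, Matrix.star_mulVec, ← Matrix.dotProduct_mulVec,
      Matrix.mulVec_mulVec, ← Matrix.mul_assoc, key', Matrix.neg_mulVec,
      dotProduct_neg]
end

section
/- Let d ≥ 1 and ε ≥ 0. Let A ∈ M_d(ℂ) be Hermitian and unitary, let W₀ ∈ M_d(ℂ) be unitary with W₀* A W₀ = −A, and let W ∈ M_d(ℂ) be unitary with ‖W₀ − W‖_op ≤ ε. Then every unit vector ψ ∈ ℂ^d with |⟨ψ, A ψ⟩| > 2ε is misclassified after the attack: the real numbers ⟨ψ, A ψ⟩ and ⟨Wψ, A Wψ⟩ are nonzero and of opposite sign. -/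
open Matrix

/-- The `ℓ² → ℓ²` operator norm (largest singular value, Schatten-∞ norm) of a
complex matrix. -/
noncomputable def opNorm {d : ℕ} (M : Matrix (Fin d) (Fin d) ℂ) : ℝ :=
  ‖Matrix.toEuclideanCLM (𝕜 := ℂ) M‖

set_option maxHeartbeats 1000000 in
/-- If `W₀` is a perfect strong universal spoof for the Hermitian
unitary measurement operator `A` (i.e. `W₀* A W₀ = -A`) and `‖W₀ - W‖_op ≤ ε`, then
every unit vector `ψ` with `|⟨ψ, Aψ⟩| > 2ε` is misclassified after the attack `W`:
the predictions `⟨ψ, Aψ⟩` and `⟨Wψ, A Wψ⟩` are nonzero and of opposite sign. -/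
theorem stmt16 {d : ℕ} (hd : 1 ≤ d) (ε : ℝ) (hε : 0 ≤ ε)
    (A W₀ W : Matrix (Fin d) (Fin d) ℂ)
    (hAherm : A.IsHermitian)
    (hA : A ∈ Matrix.unitaryGroup (Fin d) ℂ)
    (hW₀ : W₀ ∈ Matrix.unitaryGroup (Fin d) ℂ)
    (hW : W ∈ Matrix.unitaryGroup (Fin d) ℂ)
    (hspoof : star W₀ * A * W₀ = -A)
    (hclose : opNorm (W₀ - W) ≤ ε)
    (ψ : Fin d → ℂ) (hψ : star ψ ⬝ᵥ ψ = 1)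
    (hbig : 2 * ε < |(star ψ ⬝ᵥ A.mulVec ψ).re|) :
    (0 < (star ψ ⬝ᵥ A.mulVec ψ).re ∧
        (star (W.mulVec ψ) ⬝ᵥ A.mulVec (W.mulVec ψ)).re < 0) ∨
      ((star ψ ⬝ᵥ A.mulVec ψ).re < 0 ∧
        0 < (star (W.mulVec ψ) ⬝ᵥ A.mulVec (W.mulVec ψ)).re) := by
  classical
  set φ := Matrix.toEuclideanCLM (n := Fin d) (𝕜 := ℂ)
  set T := φ A with hT
  set U₀ := φ W₀ with hU₀
  set U := φ W with hU
  set v : EuclideanSpace ℂ (Fin d) := (WithLp.equiv 2 _).symm ψ with hv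
  haveI : Nontrivial (EuclideanSpace ℂ (Fin d)) := by
    refine ⟨(WithLp.equiv 2 _).symm (fun _ => (1:ℂ)), 0, fun h => ?_⟩
    have := congrArg (fun x => WithLp.equiv 2 (Fin d → ℂ) x ⟨0, hd⟩) h
    simpa using this
  -- inner product identifications
  have hinner : ∀ x : Fin d → ℂ, ∀ M : Matrix (Fin d) (Fin d) ℂ,
      (inner ℂ ((WithLp.equiv 2 _).symm x) (φ M ((WithLp.equiv 2 _).symm x)) : ℂ)
        = star x ⬝ᵥ M.mulVec x := by
    intro x M
    rw [WithLp.equiv_symm_apply, Matrix.toEuclideanCLM_toLp, EuclideanSpace.inner_toLp_toLp,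
      dotProduct_comm]
  -- norms
  have hvnorm : ‖v‖ = 1 := by
    have h2 : (inner ℂ v v : ℂ) = 1 := by
      rw [hv, WithLp.equiv_symm_apply, EuclideanSpace.inner_toLp_toLp, dotProduct_comm]; exact hψ
    have h3 := @inner_self_eq_norm_sq ℂ _ _ _ _ v
    have h4 : RCLike.re (inner ℂ v v : ℂ) = 1 := by rw [h2]; simp
    nlinarith [norm_nonneg v, h3, h4]
  have hUmem : U ∈ unitary (EuclideanSpace ℂ (Fin d) →L[ℂ] EuclideanSpace ℂ (Fin d)) := by
    constructor
    · rw [hU, ← map_star φ, ← map_mul φ, hW.1, _root_.map_one φ]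
    · rw [hU, ← map_star φ, ← map_mul φ, hW.2, _root_.map_one φ]
  have hU₀mem : U₀ ∈ unitary (EuclideanSpace ℂ (Fin d) →L[ℂ] EuclideanSpace ℂ (Fin d)) := by
    constructor
    · rw [hU₀, ← map_star φ, ← map_mul φ, hW₀.1, _root_.map_one φ]
    · rw [hU₀, ← map_star φ, ← map_mul φ, hW₀.2, _root_.map_one φ]
  have hTmem : T ∈ unitary (EuclideanSpace ℂ (Fin d) →L[ℂ] EuclideanSpace ℂ (Fin d)) := by
    constructor
    · rw [hT, ← map_star φ, ← map_mul φ, hA.1, _root_.map_one φ]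
    · rw [hT, ← map_star φ, ← map_mul φ, hA.2, _root_.map_one φ]
  have hTn : ‖T‖ = 1 := CStarRing.norm_of_mem_unitary hTmem
  have hUn : ‖U‖ = 1 := CStarRing.norm_of_mem_unitary hUmem
  have hU₀n : ‖U₀‖ = 1 := CStarRing.norm_of_mem_unitary hU₀mem
  have hdiff : ‖U - U₀‖ ≤ ε := by
    have : U₀ - U = φ (W₀ - W) := by rw [hU₀, hU, map_sub]
    calc ‖U - U₀‖ = ‖U₀ - U‖ := by rw [norm_sub_rev]
    _ = opNorm (W₀ - W) := by rw [this]; rfl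
    _ ≤ ε := hclose
  -- the three quadratic forms
  set a : ℂ := inner ℂ v (T v) with ha
  set b : ℂ := inner ℂ (U v) (T (U v)) with hb
  set b₀ : ℂ := inner ℂ (U₀ v) (T (U₀ v)) with hb₀
  have haψ : a = star ψ ⬝ᵥ A.mulVec ψ := hinner ψ A
  have hbψ : b = star (W.mulVec ψ) ⬝ᵥ A.mulVec (W.mulVec ψ) := by
    have hUv : U v = (WithLp.equiv 2 _).symm (W.mulVec ψ) := by
      rw [hU, hv, WithLp.equiv_symm_apply, Matrix.toEuclideanCLM_toLp]
    rw [hb, hUv]; exact hinner (W.mulVec ψ) A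
  -- spoof identity : b₀ = -a
  have hspoofCLM : star U₀ * T * U₀ = -T := by
    rw [hU₀, hT, ← map_star φ, ← map_mul φ, ← map_mul φ, hspoof, map_neg]
  have hb₀a : b₀ = -a := by
    have h1 : b₀ = inner ℂ v ((star U₀ * T * U₀) v) := by
      rw [hb₀, ContinuousLinearMap.star_eq_adjoint]
      rw [show ((ContinuousLinearMap.adjoint U₀) * T * U₀) v
          = (ContinuousLinearMap.adjoint U₀) (T (U₀ v)) from rfl]
      rw [ContinuousLinearMap.adjoint_inner_right]
    rw [h1, hspoofCLM]
    simp [ha, inner_neg_right]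
  -- perturbation bound
  have hkey : ‖b - b₀‖ ≤ 2 * ε := by
    have hexp : b - b₀ = inner ℂ ((U - U₀) v) (T (U v)) + inner ℂ (U₀ v) (T ((U - U₀) v)) := by
      simp only [ContinuousLinearMap.sub_apply, map_sub, inner_sub_left, inner_sub_right,
        hb, hb₀]
      ring
    have h1 : ‖(inner ℂ ((U - U₀) v) (T (U v)) : ℂ)‖ ≤ ε := by
      calc ‖(inner ℂ ((U - U₀) v) (T (U v)) : ℂ)‖ ≤ ‖(U - U₀) v‖ * ‖T (U v)‖ :=
            norm_inner_le_norm _ _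
      _ ≤ (ε * 1) * (1 * (1 * 1)) := by
          apply mul_le_mul
          · calc ‖(U - U₀) v‖ ≤ ‖U - U₀‖ * ‖v‖ := (U - U₀).le_opNorm v
            _ ≤ ε * 1 := by rw [hvnorm]; exact mul_le_mul_of_nonneg_right hdiff zero_le_one
          · calc ‖T (U v)‖ ≤ ‖T‖ * ‖U v‖ := T.le_opNorm _
            _ ≤ 1 * (1 * 1) := by
                rw [hTn]
                refine mul_le_mul_of_nonneg_left ?_ zero_le_one
                calc ‖U v‖ ≤ ‖U‖ * ‖v‖ := U.le_opNorm v
                _ = 1 * 1 := by rw [hUn, hvnorm]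
          · exact norm_nonneg _
          · positivity
      _ = ε := by ring
    have h2 : ‖(inner ℂ (U₀ v) (T ((U - U₀) v)) : ℂ)‖ ≤ ε := by
      calc ‖(inner ℂ (U₀ v) (T ((U - U₀) v)) : ℂ)‖ ≤ ‖U₀ v‖ * ‖T ((U - U₀) v)‖ :=
            norm_inner_le_norm _ _
      _ ≤ (1 * 1) * (1 * (ε * 1)) := by
          apply mul_le_mul
          · calc ‖U₀ v‖ ≤ ‖U₀‖ * ‖v‖ := U₀.le_opNorm v
            _ = 1 * 1 := by rw [hU₀n, hvnorm]
          · calc ‖T ((U - U₀) v)‖ ≤ ‖T‖ * ‖(U - U₀) v‖ := T.le_opNorm _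
            _ ≤ 1 * (ε * 1) := by
                rw [hTn]
                refine mul_le_mul_of_nonneg_left ?_ zero_le_one
                calc ‖(U - U₀) v‖ ≤ ‖U - U₀‖ * ‖v‖ := (U - U₀).le_opNorm v
                _ ≤ ε * 1 := by rw [hvnorm]; exact mul_le_mul_of_nonneg_right hdiff zero_le_one
          · exact norm_nonneg _
          · positivity
      _ = ε := by ring
    calc ‖b - b₀‖ = ‖inner ℂ ((U - U₀) v) (T (U v)) + (inner ℂ (U₀ v) (T ((U - U₀) v)) : ℂ)‖ := by
          rw [hexp]
    _ ≤ _ + _ := norm_add_le _ _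
    _ ≤ ε + ε := add_le_add h1 h2
    _ = 2 * ε := by ring
  -- conclude
  have hre : |(b - b₀).re| ≤ 2 * ε := le_trans (Complex.abs_re_le_norm _) hkey
  rw [hb₀a] at hre
  set x := (star ψ ⬝ᵥ A.mulVec ψ).re with hx
  set y := (star (W.mulVec ψ) ⬝ᵥ A.mulVec (W.mulVec ψ)).re with hy
  have hax : a.re = x := by rw [haψ]
  have hby : b.re = y := by rw [hbψ]
  have hsum : |y + x| ≤ 2 * ε := by
    have : (b - -a).re = y + x := by simp [Complex.sub_re, Complex.neg_re, hax, hby]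
    rwa [this] at hre
  rcases lt_trichotomy x 0 with hneg | hzero | hpos
  · right
    refine ⟨hneg, ?_⟩
    have habs : |x| = -x := abs_of_neg hneg
    have hb2 : 2 * ε < -x := by rwa [habs] at hbig
    have h1 := (abs_le.mp hsum).1
    linarith
  · exfalso
    rw [hzero] at hbig
    simp at hbig
    linarith
  · left
    refine ⟨hpos, ?_⟩
    have habs : |x| = x := abs_of_pos hpos
    have hb2 : 2 * ε < x := by rwa [habs] at hbig
    have h1 := (abs_le.mp hsum).2
    linarith
end

section
/- Let a > 0 and b > 0. Then ∫₀^∞ ( ∫₀^{a·y} exp(−x²) dx ) · exp(−b·y²) dy = arctan(a/√b) / (2√b). Equivalently, ∫₀^∞ erf(a y)·exp(−b y²) dy = arctan(a/√b)/√(π b), where erf(z) = (2/√π)·∫₀^z exp(−t²) dt. -/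
open MeasureTheory Set Filter Real

lemma inner_int {c : ℝ} (hc : 0 < c) :
    ∫ y in Set.Ioi (0:ℝ), y * Real.exp (-(c * y ^ 2)) = 1 / (2 * c) := by
  have hF : ∀ y ∈ Set.Ici (0:ℝ), HasDerivAt (fun y => -Real.exp (-(c * y ^ 2)) / (2 * c))
      (y * Real.exp (-(c * y ^ 2))) y := by
    intro y _
    have h1 : HasDerivAt (fun y : ℝ => -(c * y ^ 2)) (-(c * (2 * y))) y := by
      simpa using (((hasDerivAt_pow 2 y).const_mul c).fun_neg)
    have h2 := (h1.exp).fun_neg.div_const (2 * c)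
    refine h2.congr_deriv ?_
    rw [div_eq_iff (by positivity)]
    ring
  have hint : IntegrableOn (fun y => y * Real.exp (-(c * y ^ 2))) (Set.Ioi (0:ℝ)) := by
    have := (integrable_mul_exp_neg_mul_sq hc).integrableOn (s := Set.Ioi (0:ℝ))
    simpa [neg_mul] using this
  have htend : Tendsto (fun y : ℝ => -Real.exp (-(c * y ^ 2)) / (2 * c)) atTop (nhds 0) := by
    have h0 : Tendsto (fun y : ℝ => c * y ^ 2) atTop atTop :=
      (tendsto_pow_atTop (by norm_num)).const_mul_atTop hc
    have h1 : Tendsto (fun y : ℝ => -(c * y ^ 2)) atTop atBot := tendsto_neg_atBot_iff.mpr h0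
    have := (Real.tendsto_exp_atBot.comp h1).neg.div_const (2 * c)
    simpa using this
  have := integral_Ioi_of_hasDerivAt_of_tendsto' (fun x hx => hF x hx) hint htend
  rw [this]
  norm_num
  field_simp

lemma arctan_piece {a b : ℝ} (hb : 0 < b) :
    ∫ t in (0:ℝ)..a, 1 / (t ^ 2 + b) = Real.arctan (a / Real.sqrt b) / Real.sqrt b := by
  set s := Real.sqrt b with hs
  have hs0 : 0 < s := Real.sqrt_pos.mpr hb
  have hss : s ^ 2 = b := Real.sq_sqrt hb.le
  have key : ∀ t : ℝ, 1 / (t ^ 2 + b) = (1 / b) * (1 / (1 + (t / s) ^ 2)) := by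
    intro t
    rw [div_pow, hss]
    field_simp
    ring
  simp_rw [key]
  rw [intervalIntegral.integral_const_mul]
  have := intervalIntegral.integral_comp_div (a := 0) (b := a) (c := s)
    (f := fun u => 1 / (1 + u ^ 2)) hs0.ne'
  rw [this, integral_one_div_one_add_sq]
  rw [zero_div, Real.arctan_zero]
  rw [smul_eq_mul]
  have : b = s * s := by rw [← hss]; ring
  rw [this]
  field_simp
  ring



/-- The Gaussian error function `erf(z) = (2/√π) ∫₀^z exp(-t²) dt`. -/
noncomputable def erf (z : ℝ) : ℝ :=
  2 / Real.sqrt Real.pi * ∫ t in (0 : ℝ)..z, Real.exp (-t ^ 2)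

/-- For `a, b > 0`,
`∫₀^∞ (∫₀^{ay} exp(-x²) dx) exp(-by²) dy = arctan(a/√b) / (2√b)`; equivalently
`∫₀^∞ erf(ay) exp(-by²) dy = arctan(a/√b) / √(πb)`. -/
theorem stmt18 (a b : ℝ) (ha : 0 < a) (hb : 0 < b) :
    (∫ y in Set.Ioi (0 : ℝ),
        (∫ x in (0 : ℝ)..(a * y), Real.exp (-x ^ 2)) * Real.exp (-b * y ^ 2))
      = Real.arctan (a / Real.sqrt b) / (2 * Real.sqrt b) ∧
    (∫ y in Set.Ioi (0 : ℝ), erf (a * y) * Real.exp (-b * y ^ 2))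
      = Real.arctan (a / Real.sqrt b) / Real.sqrt (Real.pi * b) := by

  have hsb : 0 < Real.sqrt b := Real.sqrt_pos.mpr hb
  -- Step A: rewrite the integrand via x = t·y
  have hA : ∀ y ∈ Set.Ioi (0:ℝ),
      (∫ x in (0 : ℝ)..(a * y), Real.exp (-x ^ 2)) * Real.exp (-b * y ^ 2)
        = ∫ t in Set.Ioc (0:ℝ) a, y * Real.exp (-((t ^ 2 + b) * y ^ 2)) := by
    intro y hy
    have h1 := intervalIntegral.mul_integral_comp_mul_right (a := (0:ℝ)) (b := a) (c := y)
      (f := fun x => Real.exp (-x ^ 2))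
    rw [zero_mul] at h1
    rw [← h1, ← intervalIntegral.integral_of_le ha.le, mul_comm y,
      ← intervalIntegral.integral_mul_const, ← intervalIntegral.integral_mul_const]
    apply intervalIntegral.integral_congr
    intro t _
    dsimp only
    rw [mul_assoc, mul_comm (Real.exp _), mul_assoc, ← Real.exp_add]
    congr 1
    ring
  rw [setIntegral_congr_fun measurableSet_Ioi hA]
  -- Step B: Fubini
  set f : ℝ → ℝ → ℝ := fun y t => y * Real.exp (-((t ^ 2 + b) * y ^ 2)) with hf
  have hdom : Integrable (fun p : ℝ × ℝ => p.1 * Real.exp (-(b * p.1 ^ 2)) * 1)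
      ((volume.restrict (Set.Ioi (0:ℝ))).prod (volume.restrict (Set.Ioc (0:ℝ) a))) := by
    have h1 : Integrable (fun y : ℝ => y * Real.exp (-(b * y ^ 2)))
        (volume.restrict (Set.Ioi (0:ℝ))) := by
      have := (integrable_mul_exp_neg_mul_sq hb).integrableOn (s := Set.Ioi (0:ℝ))
      simpa [neg_mul, IntegrableOn] using this
    have h2 : Integrable (fun _ : ℝ => (1:ℝ)) (volume.restrict (Set.Ioc (0:ℝ) a)) :=
      integrableOn_const measure_Ioc_lt_top.ne
    exact h1.mul_prod h2
  have hintf : Integrable (Function.uncurry f)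
      ((volume.restrict (Set.Ioi (0:ℝ))).prod (volume.restrict (Set.Ioc (0:ℝ) a))) := by
    apply hdom.mono
    · apply Continuous.aestronglyMeasurable
      fun_prop
    · have hmem : ∀ᵐ p : ℝ × ℝ ∂((volume.restrict (Set.Ioi (0:ℝ))).prod
          (volume.restrict (Set.Ioc (0:ℝ) a))),
          p ∈ Set.Ioi (0:ℝ) ×ˢ Set.Ioc (0:ℝ) a := by
        rw [Measure.prod_restrict]
        exact ae_restrict_mem (measurableSet_Ioi.prod measurableSet_Ioc)
      filter_upwards [hmem] with p hp
      obtain ⟨hp1, hp2⟩ := hp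
      have hy : (0:ℝ) < p.1 := hp1
      have hle : p.1 * Real.exp (-((p.2 ^ 2 + b) * p.1 ^ 2))
          ≤ p.1 * Real.exp (-(b * p.1 ^ 2)) * 1 := by
        rw [mul_one]
        apply mul_le_mul_of_nonneg_left _ hy.le
        apply Real.exp_le_exp.mpr
        nlinarith [sq_nonneg p.2, sq_nonneg p.1]
      calc ‖Function.uncurry f p‖ = p.1 * Real.exp (-((p.2 ^ 2 + b) * p.1 ^ 2)) := by
            rw [Function.uncurry, hf]
            dsimp only
            rw [Real.norm_eq_abs, abs_mul, abs_of_pos hy, abs_of_pos (Real.exp_pos _)]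
        _ ≤ p.1 * Real.exp (-(b * p.1 ^ 2)) * 1 := hle
        _ ≤ ‖p.1 * Real.exp (-(b * p.1 ^ 2)) * 1‖ := le_abs_self _
  have hswap := integral_integral_swap hintf
  rw [hswap]
  -- Step C: inner integral
  have hC : ∀ t ∈ Set.Ioc (0:ℝ) a,
      (∫ y in Set.Ioi (0:ℝ), f y t) = 1 / (2 * (t ^ 2 + b)) := by
    intro t _
    exact inner_int (by positivity)
  rw [setIntegral_congr_fun measurableSet_Ioc hC]
  -- Step D: arctan integral
  have hD : (∫ t in Set.Ioc (0:ℝ) a, 1 / (2 * (t ^ 2 + b)))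
      = Real.arctan (a / Real.sqrt b) / (2 * Real.sqrt b) := by
    rw [← intervalIntegral.integral_of_le ha.le]
    have : ∀ t : ℝ, 1 / (2 * (t ^ 2 + b)) = (1/2) * (1 / (t ^ 2 + b)) := by
      intro t; rw [one_div, mul_inv, ← one_div]; ring
    simp_rw [this]
    rw [intervalIntegral.integral_const_mul, arctan_piece hb]
    field_simp
  rw [hD]
  refine ⟨rfl, ?_⟩
  have herf : ∀ y : ℝ, erf (a * y) * Real.exp (-b * y ^ 2)
      = (2 / Real.sqrt Real.pi) *
        ((∫ x in (0 : ℝ)..(a * y), Real.exp (-x ^ 2)) * Real.exp (-b * y ^ 2)) := by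
    intro y; rw [erf]; ring
  simp_rw [herf]
  rw [integral_const_mul]
  rw [setIntegral_congr_fun measurableSet_Ioi hA, hswap,
    setIntegral_congr_fun measurableSet_Ioc hC, hD]
  have hsp : 0 < Real.sqrt Real.pi := Real.sqrt_pos.mpr Real.pi_pos
  rw [Real.sqrt_mul Real.pi_pos.le]
  field_simp
end

section
/- Let N ≥ 1 and x, x' ∈ ℝ^N, and let ψ(x), ψ(x') : (Fin N → Fin 2) → ℂ be the angle-encoded product states ψ(x)(s) := ∏ⱼ (cos xⱼ if s j = 0 else sin xⱼ). Let U be a unitary on the 2^N-dimensional space of functions (Fin N → Fin 2) → ℂ and let Z be Hermitian with operator norm ‖Z‖_op ≤ 1, and set y := ⟨Uψ(x), Z Uψ(x)⟩ (real). If 4·Σⱼ (xⱼ − x'ⱼ)² < y², then y and y' := ⟨Uψ(x'), Z Uψ(x')⟩ are either both positive or both negative. That is, an angle-encoding quantum classifier is robust to any classical perturbation x ↦ x' with Σⱼ(xⱼ − x'ⱼ)² < y²/4 (in particular to perturbations with max_j |xⱼ − x'ⱼ| < |y|/(2√N)). -/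
open Matrix

/-- The angle-encoded product state `ψ(x)(s) = ∏ⱼ (cos xⱼ if s j = 0 else sin xⱼ)`,
which equals `⊗ⱼ exp(-i xⱼ σ_y)|0⟩`. -/
noncomputable def angleState {N : ℕ} (x : Fin N → ℝ) : (Fin N → Fin 2) → ℂ :=
  fun s => ∏ j, (if s j = 0 then (Real.cos (x j) : ℂ) else (Real.sin (x j) : ℂ))

-- 1 - cos t ≤ t^2/2
lemma one_sub_cos_le (t : ℝ) : 1 - Real.cos t ≤ t ^ 2 / 2 := by
  have h1 : |Real.sin (t/2)| = Real.sqrt ((1 - Real.cos t)/2) := Real.abs_sin_half t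
  have h2 : |Real.sin (t/2)| ≤ |t/2| := Real.abs_sin_le_abs
  have h0 : (0:ℝ) ≤ (1 - Real.cos t)/2 := by nlinarith [Real.cos_le_one t]
  have h3 : (1 - Real.cos t)/2 = Real.sin (t/2) ^ 2 := by
    rw [← sq_abs, h1, Real.sq_sqrt h0]
  have h4 : Real.sin (t/2) ^ 2 ≤ (t/2) ^ 2 := by
    rw [← sq_abs, ← sq_abs (t/2)]
    exact pow_le_pow_left₀ (abs_nonneg _) h2 2
  nlinarith

-- product bound
lemma one_sub_prod_le {ι : Type*} (s : Finset ι) (a : ι → ℝ) (h : ∀ i, |a i| ≤ 1) :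
    1 - ∏ i ∈ s, a i ≤ ∑ i ∈ s, (1 - a i) := by
  classical
  induction s using Finset.induction with
  | empty => simp
  | insert c s' hx ih =>
    rw [Finset.prod_insert hx, Finset.sum_insert hx]
    have hP : |∏ i ∈ s', a i| ≤ 1 := by
      calc |∏ i ∈ s', a i| = ∏ i ∈ s', |a i| := Finset.abs_prod _ _
        _ ≤ ∏ i ∈ s', (1:ℝ) := Finset.prod_le_prod (fun i _ => abs_nonneg _) (fun i _ => h i)
        _ = 1 := by simp
    have hc := h c
    have := abs_le.1 hP
    have := abs_le.1 hc
    nlinarith [ih]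

lemma dot_angleState {N : ℕ} (x x' : Fin N → ℝ) :
    star (angleState x) ⬝ᵥ angleState x' = ((∏ j, Real.cos (x j - x' j) : ℝ) : ℂ) := by
  have key : ∀ s : Fin N → Fin 2, star (angleState x s) * angleState x' s
      = ∏ j, (if s j = 0 then (Real.cos (x j) * Real.cos (x' j) : ℂ)
              else (Real.sin (x j) * Real.sin (x' j) : ℂ)) := by
    intro s
    unfold angleState
    rw [star_prod, ← Finset.prod_mul_distrib]
    refine Finset.prod_congr rfl fun j _ => ?_
    by_cases hj : s j = 0
    · simp only [if_pos hj]; rw [RCLike.star_def, Complex.conj_ofReal]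
    · simp only [if_neg hj]; rw [RCLike.star_def, Complex.conj_ofReal]
  calc star (angleState x) ⬝ᵥ angleState x'
      = ∑ s : Fin N → Fin 2, ∏ j, (if s j = 0 then (Real.cos (x j) * Real.cos (x' j) : ℂ)
              else (Real.sin (x j) * Real.sin (x' j) : ℂ)) :=
        Finset.sum_congr rfl fun s _ => key s
    _ = ∏ j, ∑ i : Fin 2, (if i = 0 then (Real.cos (x j) * Real.cos (x' j) : ℂ)
              else (Real.sin (x j) * Real.sin (x' j) : ℂ)) := (Fintype.prod_sum
          (fun (j : Fin N) (i : Fin 2) => (if i = 0 then (Real.cos (x j) * Real.cos (x' j) : ℂ)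
              else (Real.sin (x j) * Real.sin (x' j) : ℂ)))).symm
    _ = ((∏ j, Real.cos (x j - x' j) : ℝ) : ℂ) := by
        push_cast
        refine Finset.prod_congr rfl fun j _ => ?_
        rw [Fin.sum_univ_two]
        norm_num
        rw [Complex.cos_sub]

lemma unitary_dot {n : Type*} [Fintype n] [DecidableEq n] (U : Matrix n n ℂ)
    (hU : U ∈ Matrix.unitaryGroup n ℂ) (v w : n → ℂ) :
    star (U.mulVec v) ⬝ᵥ U.mulVec w = star v ⬝ᵥ w := by
  obtain ⟨h1, _⟩ := hU
  rw [star_mulVec, dotProduct_mulVec, vecMul_vecMul]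
  change star v ᵥ* (star U * U) ⬝ᵥ w = _
  rw [h1, vecMul_one]

lemma robust_bound {E : Type*} [NormedAddCommGroup E] [InnerProductSpace ℂ E]
    (T : E →L[ℂ] E) (hT : ‖T‖ ≤ 1) (a b : E) (ha : ‖a‖ = 1) (hb : ‖b‖ = 1) :
    |(inner ℂ a (T a) : ℂ).re - (inner ℂ b (T b) : ℂ).re| ≤ 2 * ‖a - b‖ := by
  have key : (inner ℂ a (T a) : ℂ) - inner ℂ b (T b)
      = inner ℂ (a - b) (T a) + inner ℂ b (T (a - b)) := by
    rw [inner_sub_left, map_sub, inner_sub_right]; ring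
  have bnd : ∀ (u w : E), ‖u‖ ≤ ‖a - b‖ → ‖w‖ ≤ 1 → ‖(inner ℂ u (T w) : ℂ)‖ ≤ ‖a - b‖ := by
    intro u w hu hw
    calc ‖(inner ℂ u (T w) : ℂ)‖ ≤ ‖u‖ * ‖T w‖ := norm_inner_le_norm _ _
      _ ≤ ‖a - b‖ * (‖T‖ * ‖w‖) := by
          have := T.le_opNorm w
          have hTw : ‖T w‖ ≤ ‖T‖ * ‖w‖ := this
          exact mul_le_mul hu hTw (norm_nonneg _) (norm_nonneg _)
      _ ≤ ‖a - b‖ * 1 := by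
          have h01 : ‖T‖ * ‖w‖ ≤ 1 := by
            calc ‖T‖ * ‖w‖ ≤ 1 * 1 := mul_le_mul hT hw (norm_nonneg _) (by norm_num)
              _ = 1 := by norm_num
          exact mul_le_mul_of_nonneg_left h01 (norm_nonneg _)
      _ = ‖a - b‖ := mul_one _
  have h1 := bnd (a - b) a le_rfl (le_of_eq ha)
  have h2' : ‖(inner ℂ b (T (a - b)) : ℂ)‖ ≤ ‖a - b‖ := by
    calc ‖(inner ℂ b (T (a - b)) : ℂ)‖ ≤ ‖b‖ * ‖T (a - b)‖ := norm_inner_le_norm _ _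
      _ ≤ 1 * (‖T‖ * ‖a - b‖) := by
          have := T.le_opNorm (a - b)
          exact mul_le_mul (le_of_eq hb) this (norm_nonneg _) (by norm_num)
      _ ≤ 1 * (1 * ‖a - b‖) := by
          have : ‖T‖ * ‖a - b‖ ≤ 1 * ‖a - b‖ :=
            mul_le_mul_of_nonneg_right hT (norm_nonneg _)
          linarith
      _ = ‖a - b‖ := by ring
  have hre : |((inner ℂ a (T a) : ℂ) - inner ℂ b (T b)).re|
      ≤ ‖(inner ℂ a (T a) : ℂ) - inner ℂ b (T b)‖ := Complex.abs_re_le_norm _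
  rw [key] at hre
  have : ‖(inner ℂ (a - b) (T a) : ℂ) + inner ℂ b (T (a - b))‖
      ≤ ‖(inner ℂ (a - b) (T a) : ℂ)‖ + ‖(inner ℂ b (T (a - b)) : ℂ)‖ := norm_add_le _ _
  have goal1 : |((inner ℂ a (T a) : ℂ)).re - ((inner ℂ b (T b) : ℂ)).re|
      = |((inner ℂ (a - b) (T a) : ℂ) + inner ℂ b (T (a - b))).re| := by
    rw [← key, Complex.sub_re]
  rw [goal1]
  calc |((inner ℂ (a - b) (T a) : ℂ) + inner ℂ b (T (a - b))).re|
      ≤ ‖(inner ℂ (a - b) (T a) : ℂ) + inner ℂ b (T (a - b))‖ := Complex.abs_re_le_norm _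
    _ ≤ ‖(inner ℂ (a - b) (T a) : ℂ)‖ + ‖(inner ℂ b (T (a - b)) : ℂ)‖ := norm_add_le _ _
    _ ≤ ‖a - b‖ + ‖a - b‖ := add_le_add h1 h2'
    _ = 2 * ‖a - b‖ := by ring


set_option maxHeartbeats 1000000 in
/-- An angle-encoding quantum classifier is robust to any
classical perturbation `x ↦ x'` with `4 Σⱼ (xⱼ - x'ⱼ)² < y²`: the predictions
`y = ⟨Uψ(x), Z Uψ(x)⟩` and `y' = ⟨Uψ(x'), Z Uψ(x')⟩` have the same sign. -/
theorem stmt19 {N : ℕ} (hN : 1 ≤ N) (x x' : Fin N → ℝ)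
    (U Z : Matrix (Fin N → Fin 2) (Fin N → Fin 2) ℂ)
    (hU : U ∈ Matrix.unitaryGroup (Fin N → Fin 2) ℂ)
    (hZ : Z.IsHermitian)
    (hZnorm : ‖Matrix.toEuclideanCLM (𝕜 := ℂ) Z‖ ≤ 1)
    (h : 4 * ∑ j, (x j - x' j) ^ 2
        < ((star (U.mulVec (angleState x)) ⬝ᵥ Z.mulVec (U.mulVec (angleState x))).re) ^ 2) :
    (0 < (star (U.mulVec (angleState x)) ⬝ᵥ Z.mulVec (U.mulVec (angleState x))).re ∧
        0 < (star (U.mulVec (angleState x')) ⬝ᵥ Z.mulVec (U.mulVec (angleState x'))).re) ∨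
      ((star (U.mulVec (angleState x)) ⬝ᵥ Z.mulVec (U.mulVec (angleState x))).re < 0 ∧
        (star (U.mulVec (angleState x')) ⬝ᵥ Z.mulVec (U.mulVec (angleState x'))).re < 0) := by
  classical
  set φ := U.mulVec (angleState x) with hφ
  set φ' := U.mulVec (angleState x') with hφ'
  set a : EuclideanSpace ℂ (Fin N → Fin 2) := (WithLp.equiv 2 ((Fin N → Fin 2) → ℂ)).symm φ
  set b : EuclideanSpace ℂ (Fin N → Fin 2) := (WithLp.equiv 2 ((Fin N → Fin 2) → ℂ)).symm φ'
  set T := Matrix.toEuclideanCLM (𝕜 := ℂ) Z with hT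
  set y := (star φ ⬝ᵥ Z.mulVec φ).re with hy
  set y' := (star φ' ⬝ᵥ Z.mulVec φ').re with hy'
  set D := ∑ j, (x j - x' j) ^ 2 with hD
  -- inner ℂ products
  have hTa : T a = (WithLp.equiv 2 ((Fin N → Fin 2) → ℂ)).symm (Z.mulVec φ) := by
    exact Matrix.toEuclideanCLM_toLp Z _
  have hTb : T b = (WithLp.equiv 2 ((Fin N → Fin 2) → ℂ)).symm (Z.mulVec φ') := by
    exact Matrix.toEuclideanCLM_toLp Z _
  have hya : (inner ℂ a (T a) : ℂ) = star φ ⬝ᵥ Z.mulVec φ := by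
    rw [hTa]; exact (EuclideanSpace.inner_toLp_toLp _ _).trans (dotProduct_comm _ _)
  have hyb : (inner ℂ b (T b) : ℂ) = star φ' ⬝ᵥ Z.mulVec φ' := by
    rw [hTb]; exact (EuclideanSpace.inner_toLp_toLp _ _).trans (dotProduct_comm _ _)
  -- unit norms
  have habs1 : ∀ j, |Real.cos (x j - x j)| ≤ 1 := fun j => Real.abs_cos_le_one _
  have hφφ : star φ ⬝ᵥ φ = 1 := by
    rw [hφ, unitary_dot U hU, dot_angleState]
    simp
  have hφφ' : star φ' ⬝ᵥ φ' = 1 := by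
    rw [hφ', unitary_dot U hU, dot_angleState]
    simp
  have hna : ‖a‖ = 1 := by
    have h1 : (inner ℂ a a : ℂ) = 1 := by
      rw [show (inner ℂ a a : ℂ) = star φ ⬝ᵥ φ from (EuclideanSpace.inner_toLp_toLp _ _).trans (dotProduct_comm _ _), hφφ]
    have h2 : ((‖a‖ ^ 2 : ℝ) : ℂ) = 1 := by
      rw [← h1, inner_self_eq_norm_sq_to_K]; norm_cast
    have h3 : ‖a‖ ^ 2 = 1 := by exact_mod_cast h2
    rw [← Real.sqrt_sq (norm_nonneg a), h3, Real.sqrt_one]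
  have hnb : ‖b‖ = 1 := by
    have h1 : (inner ℂ b b : ℂ) = 1 := by
      rw [show (inner ℂ b b : ℂ) = star φ' ⬝ᵥ φ' from (EuclideanSpace.inner_toLp_toLp _ _).trans (dotProduct_comm _ _), hφφ']
    have h2 : ((‖b‖ ^ 2 : ℝ) : ℂ) = 1 := by
      rw [← h1, inner_self_eq_norm_sq_to_K]; norm_cast
    have h3 : ‖b‖ ^ 2 = 1 := by exact_mod_cast h2
    rw [← Real.sqrt_sq (norm_nonneg b), h3, Real.sqrt_one]
  -- overlap
  have hab : (inner ℂ a b : ℂ) = ((∏ j, Real.cos (x j - x' j) : ℝ) : ℂ) := by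
    rw [show (inner ℂ a b : ℂ) = star φ ⬝ᵥ φ' from (EuclideanSpace.inner_toLp_toLp _ _).trans (dotProduct_comm _ _),
      hφ, hφ', unitary_dot U hU, dot_angleState]
  -- norm of difference
  have hsub : ‖a - b‖ ^ 2 = 2 - 2 * (∏ j, Real.cos (x j - x' j)) := by
    rw [@norm_sub_sq ℂ, hna, hnb, hab]
    simp only [RCLike.re_to_complex, Complex.ofReal_re]
    ring
  have hprod : 1 - ∏ j, Real.cos (x j - x' j) ≤ ∑ j, (1 - Real.cos (x j - x' j)) :=
    one_sub_prod_le Finset.univ _ (fun j => Real.abs_cos_le_one _)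
  have hsum : ∑ j, (1 - Real.cos (x j - x' j)) ≤ D / 2 := by
    rw [hD, Finset.sum_div]
    exact Finset.sum_le_sum fun j _ => one_sub_cos_le _
  have hdiff : ‖a - b‖ ^ 2 ≤ D := by rw [hsub]; linarith
  -- robustness bound
  have hbnd := robust_bound T hZnorm a b hna hnb
  rw [hya, hyb, ← hy, ← hy'] at hbnd
  have hD0 : 0 ≤ D := Finset.sum_nonneg fun j _ => sq_nonneg _
  have hsq : (y - y') ^ 2 ≤ 4 * D := by
    nlinarith [norm_nonneg (a - b), abs_nonneg (y - y'), sq_abs (y - y')]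
  have hy2 : (y - y') ^ 2 < y ^ 2 := lt_of_le_of_lt hsq h
  rcases lt_trichotomy y 0 with hc | hc | hc
  · right; exact ⟨hc, by nlinarith⟩
  · exfalso; rw [hc] at hy2; nlinarith
  · left; exact ⟨hc, by nlinarith⟩
end
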